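/- Let n, p, i be natural numbers with 1 ≤ n ≤ p and i ≥ 1, and let δ, γ be nonnegative integers. Suppose p·C(p+i−1, i) = (p−n)·C(n+i−1, i)·δ + ((n−1)/(n+i−1))·C(n+i−1, i)·γ (as an identity of rationals), and suppose that p > n or (n−1)·γ > 0. Then p·C(p+i, i+1) > (p−n)·C(n+i, i+1)·δ + (C(n+i, i+1) − C(n+i−1, i))·γ. -/

import Mathlib

set_option maxHeartbeats 1000000 in
/-- Key combinatorial inequality in the proof of Proposition 3 (case i ≥ 1). -/
theorem stmt15 (n p i : ℕ) (hn : 1 ≤ n) (hnp : n ≤ p) (hi : 1 ≤ i)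
    (δ γ : ℕ)
    (h : (p : ℚ) * (Nat.choose (p + i - 1) i)
          = ((p : ℚ) - n) * (Nat.choose (n + i - 1) i) * δ
            + (((n : ℚ) - 1) / ((n : ℚ) + i - 1)) * (Nat.choose (n + i - 1) i) * γ)
    (hpos : p > n ∨ (n - 1) * γ > 0) :
    (p : ℚ) * (Nat.choose (p + i) (i + 1))
      > ((p : ℚ) - n) * (Nat.choose (n + i) (i + 1)) * δ
        + ((Nat.choose (n + i) (i + 1) : ℚ) - (Nat.choose (n + i - 1) i)) * γ := by
  have hA : 0 < ((Nat.choose (p + i - 1) i : ℕ) : ℚ) := by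
    exact_mod_cast Nat.choose_pos (by omega)
  have hB : 0 < ((Nat.choose (n + i - 1) i : ℕ) : ℚ) := by
    exact_mod_cast Nat.choose_pos (by omega)
  have hn1 : (1:ℚ) ≤ (n:ℚ) := by exact_mod_cast hn
  have hi1 : (1:ℚ) ≤ (i:ℚ) := by exact_mod_cast hi
  have hq : (0:ℚ) < (n : ℚ) + i - 1 := by linarith
  have e1 : ((p:ℚ) + i) * Nat.choose (p + i - 1) i
      = Nat.choose (p + i) (i + 1) * ((i:ℚ) + 1) := by
    have := Nat.add_one_mul_choose_eq (p + i - 1) i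
    rw [show p + i - 1 + 1 = p + i by omega] at this
    exact_mod_cast this
  have e2 : ((n:ℚ) + i) * Nat.choose (n + i - 1) i
      = Nat.choose (n + i) (i + 1) * ((i:ℚ) + 1) := by
    have := Nat.add_one_mul_choose_eq (n + i - 1) i
    rw [show n + i - 1 + 1 = n + i by omega] at this
    exact_mod_cast this
  set A := ((Nat.choose (p + i - 1) i : ℕ) : ℚ) with hAdef
  set B := ((Nat.choose (n + i - 1) i : ℕ) : ℚ) with hBdef
  set A' := ((Nat.choose (p + i) (i + 1) : ℕ) : ℚ) with hA'def
  set B' := ((Nat.choose (n + i) (i + 1) : ℕ) : ℚ) with hB'def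
  -- clear the denominator in h
  have H : ((n:ℚ) + i - 1) * ((p:ℚ) * A)
      = ((n:ℚ) + i - 1) * (((p:ℚ) - n) * B * δ) + ((n:ℚ) - 1) * B * γ := by
    have := congrArg (fun x => ((n:ℚ) + i - 1) * x) h
    rw [this]
    field_simp
  have hpn : (0:ℚ) ≤ (p:ℚ) - n := by
    have : (n:ℚ) ≤ p := by exact_mod_cast hnp
    linarith
  have hγnat : (0:ℚ) ≤ (γ:ℚ) := by positivity
  have hγ : (0:ℚ) ≤ ((n:ℚ) - 1) * γ :=
    mul_nonneg (by linarith) hγnat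
  have hδ : (0:ℚ) ≤ (δ:ℚ) := by positivity
  have hp0 : (0:ℚ) < p := by exact_mod_cast Nat.lt_of_lt_of_le hn hnp
  -- key positivity
  have key : (0:ℚ) < ((n:ℚ) + i - 1) * ((p:ℚ) - n)^2 * B * δ
      + ((n:ℚ) - 1) * B * γ * ((p:ℚ) - n + 1) := by
    have hfst : (0:ℚ) ≤ ((n:ℚ) + i - 1) * ((p:ℚ) - n)^2 * B * δ :=
      mul_nonneg (mul_nonneg (mul_nonneg hq.le (sq_nonneg _)) hB.le) hδ
    have hsnd : (0:ℚ) ≤ ((n:ℚ) - 1) * B * γ * ((p:ℚ) - n + 1) :=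
      mul_nonneg (mul_nonneg (mul_nonneg (by linarith) hB.le) hγnat) (by linarith)
    rcases hpos with hlt | hγpos
    · have hpn' : (0:ℚ) < (p:ℚ) - n := by
        have : (n:ℚ) < p := by exact_mod_cast hlt
        linarith
      rcases eq_or_lt_of_le hδ with hδ0 | hδpos
      · rcases eq_or_lt_of_le hγ with hγ0 | hγ'
        · exfalso
          have hz : ((n:ℚ) - 1) * B * (γ:ℚ) = 0 := by
            rw [mul_right_comm, ← hγ0, zero_mul]
          rw [← hδ0] at H
          nlinarith [H, hz, mul_pos hq (mul_pos hp0 hA)]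
        · nlinarith [mul_pos (mul_pos hγ' hB) (show (0:ℚ) < (p:ℚ) - n + 1 by linarith)]
      · nlinarith [mul_pos (mul_pos (mul_pos hq (pow_pos hpn' 2)) hB) hδpos]
    · have h2 : 2 ≤ n := by
        rcases Nat.lt_or_ge n 2 with h' | h'
        · interval_cases n <;> simp_all
        · exact h'
      have hγ1 : 1 ≤ γ := by
        rcases Nat.eq_zero_or_pos γ with h' | h'
        · subst h'; simp at hγpos
        · exact h'
      have hn2 : (2:ℚ) ≤ (n:ℚ) := by exact_mod_cast h2
      have hγ1' : (1:ℚ) ≤ (γ:ℚ) := by exact_mod_cast hγ1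
      nlinarith [mul_pos (mul_pos (mul_pos (show (0:ℚ) < (n:ℚ) - 1 by linarith) hB)
        (show (0:ℚ) < (γ:ℚ) by linarith))
        (show (0:ℚ) < (p:ℚ) - n + 1 by linarith)]
  -- the algebraic identity relating the goal to `key`
  have Eq : ((i:ℚ) + 1) * ((n:ℚ) + i - 1)
        * ((p:ℚ) * A' - (((p:ℚ) - n) * B' * δ + (B' - B) * γ))
      = ((n:ℚ) + i - 1) * ((p:ℚ) - n)^2 * B * δ
        + ((n:ℚ) - 1) * B * γ * ((p:ℚ) - n + 1) := by
    linear_combination (-((n:ℚ) + i - 1) * (p:ℚ)) * e1 + ((p:ℚ) + i) * H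
      + (((n:ℚ) + i - 1) * ((p:ℚ) - n) * δ + ((n:ℚ) + i - 1) * γ) * e2
  by_contra hcon
  push_neg at hcon
  have hc : (0:ℚ) < ((i:ℚ) + 1) * ((n:ℚ) + i - 1) := by positivity
  nlinarith [Eq, key, mul_nonneg hc.le (sub_nonneg.mpr hcon)]
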